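/- In the HIV ODE system above, the uninfected equilibrium (T, T*, V) = (λ/μ_T, 0, 0) always exists, and it is the unique equilibrium with nonnegative coordinates if and only if γπλ ≤ μ_T μ_{T*} μ_V. -/

import Mathlib

/-- For the HIV ODE system with positive parameters, the uninfected
equilibrium `(T, T*, V) = (λ/μ_T, 0, 0)` always exists, and it is the unique
equilibrium with nonnegative coordinates if and only if `γπλ ≤ μ_T μ_{T*} μ_V`. -/
theorem stmt13 (lam gam muT muTs piv muV : ℝ)
    (hlam : 0 < lam) (hgam : 0 < gam) (hmuT : 0 < muT) (hmuTs : 0 < muTs)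
    (hpiv : 0 < piv) (hmuV : 0 < muV) :
    -- (λ/μ_T, 0, 0) is always an equilibrium
    (lam - gam * (lam / muT) * 0 - muT * (lam / muT) = 0 ∧
     gam * (lam / muT) * 0 - muTs * 0 = 0 ∧
     piv * 0 - muV * 0 = 0) ∧
    -- uniqueness among nonnegative equilibria ↔ γπλ ≤ μ_T μ_{T*} μ_V
    ((∀ T Ts V : ℝ, 0 ≤ T → 0 ≤ Ts → 0 ≤ V →
        lam - gam * T * V - muT * T = 0 →
        gam * T * V - muTs * Ts = 0 →
        piv * Ts - muV * V = 0 →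
        (T, Ts, V) = (lam / muT, 0, 0)) ↔
      gam * piv * lam ≤ muT * muTs * muV) := by
  constructor
  · refine ⟨?_, by ring, by ring⟩
    field_simp
    ring
  constructor
  · intro h
    by_contra hle
    push_neg at hle
    -- infected equilibrium
    set T := muTs * muV / (gam * piv) with hT
    have hTpos : 0 < T := by positivity
    set V := (lam - muT * T) / (gam * T) with hV
    have hlt : muT * T < lam := by
      rw [hT, mul_div_assoc', div_lt_iff₀ (by positivity)]
      nlinarith
    have hVpos : 0 < V := by
      rw [hV]
      exact div_pos (by linarith) (by positivity)
    set Ts := gam * T * V / muTs with hTs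
    have hTspos : 0 < Ts := by positivity
    have h1 : lam - gam * T * V - muT * T = 0 := by
      rw [hV]; field_simp; ring
    have h2 : gam * T * V - muTs * Ts = 0 := by
      rw [hTs]; field_simp; ring
    have h3 : piv * Ts - muV * V = 0 := by
      rw [hTs, hT]; field_simp; ring
    have := h T Ts V hTpos.le hTspos.le hVpos.le h1 h2 h3
    simp only [Prod.mk.injEq] at this
    exact absurd this.2.2 hVpos.ne'
  · intro hle T Ts V hT hTs hV h1 h2 h3
    rcases eq_or_lt_of_le hV with hV0 | hVpos
    · have hTs0 : Ts = 0 := by nlinarith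
      have hT0 : T = lam / muT := by
        field_simp
        nlinarith
      simp [hT0, hTs0, ← hV0]
    · exfalso
      -- from h2, h3: gam*piv*T*V = muTs*muV*V, so gam*piv*T = muTs*muV
      have hkey : gam * piv * T = muTs * muV := by
        have : (gam * piv * T - muTs * muV) * V = 0 := by nlinarith
        rcases mul_eq_zero.mp this with h | h
        · linarith
        · exact absurd h hVpos.ne'
      have hTpos : 0 < T := by
        rcases lt_or_ge 0 T with h | h
        · exact h
        · exfalso; nlinarith [mul_pos hmuTs hmuV, mul_pos hgam hpiv]
      -- lam = gam*T*V + muT*T > muT*T, and muT*gam*piv*T = muT*muTs*muV ≥ gam*piv*lam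
      nlinarith [mul_pos (mul_pos hgam hTpos) hVpos, mul_pos hgam hpiv]
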